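/- For n > 1, the epigraph of f_n, i.e. the set {(z,w) ∈ [0,1]×[0,1] : w ≥ f_n(z)}, is convex, where f_n(z) = √(1 - ((1-β_n²)/√α_n)·√z) for z ∈ [0, α_n] and f_n(z) = (β_n/(1-α_n))(1-z) for z ∈ [α_n, 1]. -/

import Mathlib

open Real Set

set_option maxHeartbeats 1000000 in
theorem stmt_3 (n : ℕ) (hn : 1 < n)
    (α β : ℝ)
    (hα : α = ((n : ℝ) - 1) / (3 * ((n : ℝ) + 1)))
    (hβ : β = Real.sqrt (((n : ℝ) + 2) / (3 * (n : ℝ))))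
    (f : ℝ → ℝ)
    (hf : ∀ z, f z = if z ≤ α then Real.sqrt (1 - ((1 - β ^ 2) / Real.sqrt α) * Real.sqrt z)
                     else (β / (1 - α)) * (1 - z)) :
    Convex ℝ {p : ℝ × ℝ | p.1 ∈ Set.Icc (0:ℝ) 1 ∧ p.2 ∈ Set.Icc (0:ℝ) 1 ∧ f p.1 ≤ p.2} := by
  have hfe : f = fun z => if z ≤ α then
      Real.sqrt (1 - ((1 - β ^ 2) / Real.sqrt α) * Real.sqrt z)
      else (β / (1 - α)) * (1 - z) := funext hf
  subst hfe
  -- basic numeric facts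
  have hN : (2:ℝ) ≤ (n:ℝ) := by exact_mod_cast hn
  have hα0 : 0 < α := by
    rw [hα]; apply div_pos <;> nlinarith
  have hα1 : α < 1 := by
    rw [hα]; rw [div_lt_one (by nlinarith)]; nlinarith
  have h1α : (0:ℝ) < 1 - α := by linarith
  have hsα : 0 < Real.sqrt α := Real.sqrt_pos.2 hα0
  have hβ2 : β ^ 2 = ((n:ℝ) + 2) / (3 * (n:ℝ)) := by
    rw [hβ, sq_sqrt]; positivity
  have hβ0 : 0 < β := by
    rw [hβ]; apply Real.sqrt_pos.2; positivity
  have hβub : β ^ 2 ≤ 2/3 := by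
    rw [hβ2, div_le_div_iff₀ (by positivity) (by norm_num)]; nlinarith
  have hβlb : 1/3 < β ^ 2 := by
    rw [hβ2, lt_div_iff₀ (by positivity)]; nlinarith
  set c : ℝ := (1 - β ^ 2) / Real.sqrt α with hc
  have hc0 : 0 < c := by
    apply div_pos (by nlinarith) hsα
  have hss : Real.sqrt α * Real.sqrt α = α := Real.mul_self_sqrt hα0.le
  have hcα : c * Real.sqrt α = 1 - β ^ 2 := by
    rw [hc]; field_simp
  -- key slope-matching identity
  have hkey : (1 - β ^ 2) * (1 - α) = 4 * α * β ^ 2 := by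
    rw [hβ2, hα]; field_simp; ring
  -- positivity of 1 - c √z for z ≤ α
  have hpos : ∀ z : ℝ, z ≤ α → c * Real.sqrt z ≤ 1 - β ^ 2 := by
    intro z hz
    calc c * Real.sqrt z ≤ c * Real.sqrt α :=
          mul_le_mul_of_nonneg_left (Real.sqrt_le_sqrt hz) hc0.le
      _ = 1 - β ^ 2 := hcα
  have hpos' : ∀ z : ℝ, z ≤ α → 0 < 1 - c * Real.sqrt z := by
    intro z hz; have := hpos z hz; nlinarith
  -- the two pieces
  set C : ℝ → ℝ := fun z => Real.sqrt (1 - c * Real.sqrt z) with hCdef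
  set L : ℝ → ℝ := fun z => (β / (1 - α)) * (1 - z) with hLdef
  set g : ℝ → ℝ := fun z => if z ≤ α then C z else L z with hgdef
  -- derivative of the curve piece
  have hCd : ∀ x : ℝ, 0 < x → x ≤ α →
      HasDerivAt C (-c / (4 * Real.sqrt x * Real.sqrt (1 - c * Real.sqrt x))) x := by
    intro x hx hxα
    have h1 : HasDerivAt Real.sqrt (1 / (2 * Real.sqrt x)) x := Real.hasDerivAt_sqrt hx.ne'
    have h2 : HasDerivAt (fun z => 1 - c * Real.sqrt z) (-(c * (1 / (2 * Real.sqrt x)))) x :=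
      (h1.const_mul c).const_sub 1
    have hne : (1 : ℝ) - c * Real.sqrt x ≠ 0 := (hpos' x hxα).ne'
    have h3 := (Real.hasDerivAt_sqrt hne).comp x h2
    have hsx : 0 < Real.sqrt x := Real.sqrt_pos.2 hx
    have hs1 : 0 < Real.sqrt (1 - c * Real.sqrt x) := Real.sqrt_pos.2 (hpos' x hxα)
    have key : ∀ a b d : ℝ, b ≠ 0 → d ≠ 0 →
        1/(2*d) * -(a * (1/(2*b))) = -a/(4*b*d) := by
      intros a b d hb hd; field_simp; ring_nf
      try exact Or.inl trivial
    rw [← key c (Real.sqrt x) (Real.sqrt (1 - c * Real.sqrt x)) hsx.ne' hs1.ne']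
    exact h3
  -- derivative of the line piece
  have hLd : ∀ x : ℝ, HasDerivAt L (-(β / (1 - α))) x := by
    intro x
    have h := ((hasDerivAt_id x).const_sub 1).const_mul (β / (1 - α))
    rw [hLdef]
    rw [show -(β / (1 - α)) = β / (1 - α) * -1 by ring]; exact h
  -- values match at α
  have hCval : C α = β := by
    rw [hCdef]
    simp only
    rw [hcα, show (1:ℝ) - (1 - β ^ 2) = β ^ 2 by ring, Real.sqrt_sq hβ0.le]
  have hLval : L α = β := by
    rw [hLdef]; field_simp
  -- derivatives match at α
  have hmatch : -c / (4 * Real.sqrt α * Real.sqrt (1 - c * Real.sqrt α)) = -(β / (1 - α)) := by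
    rw [hcα, show (1:ℝ) - (1 - β ^ 2) = β ^ 2 by ring, Real.sqrt_sq hβ0.le]
    have hA : (0:ℝ) < 4 * Real.sqrt α * β := by positivity
    have hcm : c * (1 - α) = 4 * Real.sqrt α * β ^ 2 := by
      rw [hc, div_mul_eq_mul_div, div_eq_iff hsα.ne']
      nlinarith [hss, hkey]
    have h2 : c / (4 * Real.sqrt α * β) = β / (1 - α) := by
      rw [div_eq_div_iff hA.ne' h1α.ne']
      nlinarith [hcm]
    rw [neg_div, h2]
  -- the candidate derivative function
  set F : ℝ → ℝ := fun z => if z ≤ α then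
      -c / (4 * Real.sqrt z * Real.sqrt (1 - c * Real.sqrt z)) else -(β / (1 - α)) with hF
  -- g has derivative F on (0,1)
  have hfd : ∀ x ∈ Ioo (0:ℝ) 1, HasDerivAt g (F x) x := by
    intro x hx
    rcases lt_trichotomy x α with hxa | hxa | hxa
    · have hFx : F x = -c / (4 * Real.sqrt x * Real.sqrt (1 - c * Real.sqrt x)) := by
        rw [hF]; simp [hxa.le]
      rw [hFx]
      refine (hCd x hx.1 hxa.le).congr_of_eventuallyEq ?_
      filter_upwards [Iio_mem_nhds hxa] with z hz
      simp [hgdef, le_of_lt (mem_Iio.1 hz)]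
    · have hFx : F x = -(β / (1 - α)) := by rw [hF, hxa]; simp [hmatch]
      rw [hFx, hxa]
      have hCw : HasDerivWithinAt g (-(β / (1 - α))) (Iic α) α := by
        have h := (hCd α hα0 le_rfl).hasDerivWithinAt (s := Iic α)
        rw [hmatch] at h
        exact h.congr (fun z hz => by simp [hgdef, mem_Iic.1 hz]) (by simp [hgdef])
      have hLw : HasDerivWithinAt g (-(β / (1 - α))) (Ici α) α := by
        refine ((hLd α).hasDerivWithinAt (s := Ici α)).congr (fun z hz => ?_)
          (by simp [hgdef, hCval, hLval])
        rcases eq_or_lt_of_le (mem_Ici.1 hz) with h | h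
        · rw [← h]; simp [hgdef, hCval, hLval]
        · simp [hgdef, not_le.2 h]
      have h := hCw.union hLw
      rwa [Iic_union_Ici, hasDerivWithinAt_univ] at h
    · have hFx : F x = -(β / (1 - α)) := by rw [hF]; simp [not_le.2 hxa]
      rw [hFx]
      refine (hLd x).congr_of_eventuallyEq ?_
      filter_upwards [Ioi_mem_nhds hxa] with z hz
      simp [hgdef, not_le.2 (mem_Ioi.1 hz)]
  -- continuity of g
  have hgc : Continuous g := by
    rw [hgdef]
    apply continuous_if_le continuous_id continuous_const
    · exact (Real.continuous_sqrt.comp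
        (continuous_const.sub (continuous_const.mul Real.continuous_sqrt))).continuousOn
    · exact (continuous_const.mul (continuous_const.sub continuous_id)).continuousOn
    · intro x hx
      simp only [id_eq] at hx
      rw [hx]
      show C α = L α
      rw [hCval, hLval]
  -- monotonicity of F on (0,1)
  have haux : ∀ u v : ℝ, 0 < u → u ≤ v → v ≤ α →
      -c / (4 * Real.sqrt u * Real.sqrt (1 - c * Real.sqrt u)) ≤
      -c / (4 * Real.sqrt v * Real.sqrt (1 - c * Real.sqrt v)) := by
    intro u v hu huv hv
    have hv0 : 0 < v := lt_of_lt_of_le hu huv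
    have hsu : 0 < Real.sqrt u := Real.sqrt_pos.2 hu
    have hsv : 0 < Real.sqrt v := Real.sqrt_pos.2 hv0
    have hpu : 0 < 1 - c * Real.sqrt u := hpos' u (le_trans huv hv)
    have hpv : 0 < 1 - c * Real.sqrt v := hpos' v hv
    have hAu : 0 < Real.sqrt u * Real.sqrt (1 - c * Real.sqrt u) :=
      mul_pos hsu (Real.sqrt_pos.2 hpu)
    have hAv : 0 < Real.sqrt v * Real.sqrt (1 - c * Real.sqrt v) :=
      mul_pos hsv (Real.sqrt_pos.2 hpv)
    have hmono : Real.sqrt u * Real.sqrt (1 - c * Real.sqrt u) ≤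
        Real.sqrt v * Real.sqrt (1 - c * Real.sqrt v) := by
      rw [← Real.sqrt_mul hu.le, ← Real.sqrt_mul hv0.le]
      apply Real.sqrt_le_sqrt
      have ha2 : Real.sqrt u ^ 2 = u := Real.sq_sqrt hu.le
      have hb2 : Real.sqrt v ^ 2 = v := Real.sq_sqrt hv0.le
      have hcu : c * Real.sqrt u ≤ 2/3 := le_trans (hpos u (le_trans huv hv)) (by nlinarith)
      have hcv : c * Real.sqrt v ≤ 2/3 := le_trans (hpos v hv) (by nlinarith)
      have hab : Real.sqrt u ≤ Real.sqrt v := Real.sqrt_le_sqrt huv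
      have hsum : c * (Real.sqrt u ^ 2 + Real.sqrt u * Real.sqrt v + Real.sqrt v ^ 2)
          ≤ Real.sqrt u + Real.sqrt v := by
        nlinarith [mul_le_mul_of_nonneg_right hcu hsu.le,
          mul_le_mul_of_nonneg_right hcv hsv.le,
          mul_le_mul_of_nonneg_right hcv hsu.le]
      nlinarith [mul_nonneg (sub_nonneg.2 hab) (sub_nonneg.2 hsum), ha2, hb2]
    rw [neg_div, neg_div, neg_le_neg_iff]
    apply div_le_div_of_nonneg_left hc0.le (by linarith)
    nlinarith [hmono, hAu]
  have hFmono : ∀ x ∈ Ioo (0:ℝ) 1, ∀ y ∈ Ioo (0:ℝ) 1, x ≤ y → F x ≤ F y := by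
    intro x hx y hy hxy
    by_cases hyα : y ≤ α
    · have hxα : x ≤ α := le_trans hxy hyα
      rw [hF]
      simp only [hxα, hyα, if_pos]
      exact haux x y hx.1 hxy hyα
    · by_cases hxα : x ≤ α
      · have e1 : F x = -c / (4 * Real.sqrt x * Real.sqrt (1 - c * Real.sqrt x)) := by
          rw [hF]; simp [hxα]
        have e2 : F y = -(β / (1 - α)) := by
          rw [hF]; simp [hyα]
        rw [e1, e2, ← hmatch]
        exact haux x α hx.1 hxα le_rfl
      · have e1 : F x = -(β / (1 - α)) := by rw [hF]; simp [hxα]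
        have e2 : F y = -(β / (1 - α)) := by rw [hF]; simp [hyα]
        rw [e1, e2]
  -- convexity of g on [0,1]
  have hg_diff : DifferentiableOn ℝ g (interior (Icc (0:ℝ) 1)) := by
    rw [interior_Icc]
    exact fun x hx => ((hfd x hx).differentiableAt).differentiableWithinAt
  have hg_mono : MonotoneOn (deriv g) (interior (Icc (0:ℝ) 1)) := by
    rw [interior_Icc]
    intro x hx y hy hxy
    rw [(hfd x hx).deriv, (hfd y hy).deriv]
    exact hFmono x hx y hy hxy
  have hconv : ConvexOn ℝ (Icc (0:ℝ) 1) g :=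
    MonotoneOn.convexOn_of_deriv (convex_Icc 0 1) hgc.continuousOn hg_diff hg_mono
  -- assemble
  have h1 : Convex ℝ {p : ℝ × ℝ | p.1 ∈ Icc (0:ℝ) 1 ∧ g p.1 ≤ p.2} :=
    hconv.convex_epigraph
  have h2 : Convex ℝ {p : ℝ × ℝ | p.2 ∈ Icc (0:ℝ) 1} :=
    (convex_Icc (0:ℝ) 1).linear_preimage (LinearMap.snd ℝ ℝ ℝ)
  have hseteq : {p : ℝ × ℝ | p.1 ∈ Icc (0:ℝ) 1 ∧ p.2 ∈ Icc (0:ℝ) 1 ∧ g p.1 ≤ p.2} =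
      {p : ℝ × ℝ | p.1 ∈ Icc (0:ℝ) 1 ∧ g p.1 ≤ p.2} ∩ {p : ℝ × ℝ | p.2 ∈ Icc (0:ℝ) 1} := by
    ext p; simp only [mem_setOf_eq, mem_inter_iff]; tauto
  show Convex ℝ {p : ℝ × ℝ | p.1 ∈ Icc (0:ℝ) 1 ∧ p.2 ∈ Icc (0:ℝ) 1 ∧ g p.1 ≤ p.2}
  rw [hseteq]
  exact h1.inter h2
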